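/- Every subset A of an ij-weakly Lindelöf ij-semiregular bitopological space X that is both ij-regular closed and τ_j-open is ij-weakly Lindelöf relative to X. -/

import Mathlib

open Set Topology

universe u

variable {X : Type u}

/-- `X` with topologies `t1`, `t2` is ij-weakly Lindelöf: every `t1`-open cover admits a
countable subfamily whose union is `t2`-dense. -/
def IjWeaklyLindelof (t1 t2 : TopologicalSpace X) : Prop :=
  ∀ {ι : Type u} (U : ι → Set X), (∀ a, IsOpen[t1] (U a)) → (⋃ a, U a) = Set.univ →
    ∃ s : Set ι, s.Countable ∧ @closure X t2 (⋃ a ∈ s, U a) = Set.univ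

/-- `S` is ij-regular open: `S = i-int(j-cl(S))`. -/
def IjRegularOpen (t1 t2 : TopologicalSpace X) (S : Set X) : Prop :=
  @interior X t1 (@closure X t2 S) = S

/-- `S` is ij-regular closed: `S = i-cl(j-int(S))`. -/
def IjRegularClosed (t1 t2 : TopologicalSpace X) (S : Set X) : Prop :=
  @closure X t1 (@interior X t2 S) = S

/-- `S` is ij-weakly Lindelöf relative to `X`. -/
def IjRelWeaklyLindelof (t1 t2 : TopologicalSpace X) (S : Set X) : Prop :=
  ∀ {ι : Type u} (U : ι → Set X), (∀ a, IsOpen[t1] (U a)) → S ⊆ ⋃ a, U a →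
    ∃ s : Set ι, s.Countable ∧ S ⊆ @closure X t2 (⋃ a ∈ s, U a)

/-- `X` is ij-semiregular (every `t1`-open set is a union of ij-regular open sets). -/
def IjSemiregular (t1 t2 : TopologicalSpace X) : Prop :=
  ∀ V : Set X, IsOpen[t1] V →
    ∃ 𝒮 : Set (Set X), (∀ S ∈ 𝒮, IjRegularOpen t1 t2 S) ∧ V = ⋃₀ 𝒮

theorem stmt15 (t1 t2 : TopologicalSpace X) (hW : IjWeaklyLindelof t1 t2)
    (hsr : IjSemiregular t1 t2) (A : Set X) (hrc : IjRegularClosed t1 t2 A)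
    (hAopen : IsOpen[t2] A) :
    IjRelWeaklyLindelof t1 t2 A := by
  intro ι U hU hAU
  have hclA : @closure X t1 A = A := by
    have h2 : @interior X t2 A = A := @IsOpen.interior_eq X t2 A hAopen
    calc @closure X t1 A = @closure X t1 (@interior X t2 A) := by rw [h2]
      _ = A := hrc
  have hA1closed : IsClosed[t1] A := by
    rw [← hclA]; exact @isClosed_closure X t1 A
  set V : Option ι → Set X := fun o => o.elim Aᶜ U with hV
  have hVopen : ∀ o, IsOpen[t1] (V o) := by
    rintro (_|a)
    · exact hA1closed.isOpen_compl
    · exact hU a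
  have hVcov : (⋃ o, V o) = Set.univ := by
    ext x; simp only [mem_iUnion, mem_univ, iff_true]
    by_cases hx : x ∈ A
    · obtain ⟨a, ha⟩ := mem_iUnion.mp (hAU hx)
      exact ⟨some a, ha⟩
    · exact ⟨none, hx⟩
  obtain ⟨s, hsc, hscl⟩ := hW V hVopen hVcov
  refine ⟨some ⁻¹' s, hsc.preimage (Option.some_injective ι), ?_⟩
  intro x hx
  letI := t2
  rw [mem_closure_iff]
  intro W hW' hxW
  have hxcl : x ∈ closure (⋃ o ∈ s, V o) := hscl ▸ mem_univ x
  have hWA : IsOpen (W ∩ A) := hW'.inter hAopen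
  have hne : ((W ∩ A) ∩ ⋃ o ∈ s, V o).Nonempty :=
    (mem_closure_iff.mp hxcl) _ hWA ⟨hxW, hx⟩
  obtain ⟨y, ⟨hyW, hyA⟩, hyU⟩ := hne
  simp only [mem_iUnion] at hyU
  obtain ⟨o, ho, hyo⟩ := hyU
  match o with
  | none => exact absurd hyA hyo
  | some a => exact ⟨y, hyW, mem_biUnion ho hyo⟩
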